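/- If u₁u₂ and u₂u₃ are Lyndon words (ALSWs) and u₂ is nonempty, then u₁u₂u₃ is a Lyndon word. -/
import Mathlib


/-- The lexicographic ordering on words with the convention that a proper prefix is
greater than the word extending it (`u ≻ uv` for `v ≠ 1`): `gtLex u v` means `u ≻ v`. -/
def gtLex {X : Type*} [LinearOrder X] : List X → List X → Prop
  | [], [] => False
  | [], _ :: _ => True
  | _ :: _, [] => False
  | a :: u, b :: v => b < a ∨ (a = b ∧ gtLex u v)

/-- `w` is an associative Lyndon–Shirshov word: `w` is nonempty and `w ≻ v ++ u` for every
factorization `w = u ++ v` into nonempty words. -/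
def IsALSW {X : Type*} [LinearOrder X] (w : List X) : Prop :=
  w ≠ [] ∧ ∀ u v : List X, u ≠ [] → v ≠ [] → w = u ++ v → gtLex w (v ++ u)

theorem gtLex_irrefl {X : Type*} [LinearOrder X] : ∀ u : List X, ¬ gtLex u u
  | [] => fun h => h
  | a :: u => fun h => h.elim (fun h => lt_irrefl a h) (fun h => gtLex_irrefl u h.2)

theorem gtLex_trans {X : Type*} [LinearOrder X] :
    ∀ u v w : List X, gtLex u v → gtLex v w → gtLex u w
  | [], [], _ => fun h _ => h.elim
  | [], _ :: _, [] => fun _ h => h.elim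
  | [], _ :: _, _ :: _ => fun _ _ => trivial
  | _ :: _, [], _ => fun h _ => h.elim
  | _ :: _, _ :: _, [] => fun _ h => h.elim
  | a :: u, b :: v, c :: w => fun h1 h2 => by
      rcases h1 with h1 | ⟨rfl, h1⟩
      · rcases h2 with h2 | ⟨rfl, h2⟩
        · exact Or.inl (h2.trans h1)
        · exact Or.inl h1
      · rcases h2 with h2 | ⟨rfl, h2⟩
        · exact Or.inl h2
        · exact Or.inr ⟨rfl, gtLex_trans _ _ _ h1 h2⟩

/-- If `u ≻ v` and `v` is not longer than `u` (so the comparison is decided at a genuine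
letter difference), then appending anything to both sides preserves `≻`. -/
theorem gtLex_append {X : Type*} [LinearOrder X] :
    ∀ u v x y : List X, gtLex u v → v.length ≤ u.length → gtLex (u ++ x) (v ++ y)
  | [], [], _, _ => fun h _ => h.elim
  | [], _ :: _, _, _ => fun _ h => absurd h (by simp)
  | _ :: _, [], _, _ => fun h _ => h.elim
  | a :: u, b :: v, x, y => fun h hl => by
      rcases h with h | ⟨rfl, h⟩
      · exact Or.inl h
      · exact Or.inr ⟨rfl, gtLex_append u v x y h (by simpa using hl)⟩

/-- If `u ≻ v ++ x` then either `u ≻ v`, or `v` is a prefix of `u`. -/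
theorem gtLex_of_append {X : Type*} [LinearOrder X] :
    ∀ u v x : List X, gtLex u (v ++ x) → gtLex u v ∨ ∃ t, u = v ++ t
  | u, [], _ => fun _ => Or.inr ⟨u, rfl⟩
  | [], _ :: _, _ => fun _ => Or.inl trivial
  | a :: u, b :: v, x => fun h => by
      rcases h with h | ⟨rfl, h⟩
      · exact Or.inl (Or.inl h)
      · rcases gtLex_of_append u v x h with h' | ⟨t, rfl⟩
        · exact Or.inl (Or.inr ⟨rfl, h'⟩)
        · exact Or.inr ⟨t, rfl⟩

/-- A common prefix may be cancelled from a `≻` comparison. -/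
theorem gtLex_strip {X : Type*} [LinearOrder X] :
    ∀ c u v : List X, gtLex (c ++ u) (c ++ v) → gtLex u v
  | [], _, _ => id
  | a :: c, u, v => fun h => by
      rcases h with h | ⟨_, h⟩
      · exact absurd h (lt_irrefl a)
      · exact gtLex_strip c u v h

/-- An ALSW is greater than each of its proper nonempty suffixes. -/
theorem suffGt_of_isALSW {X : Type*} [LinearOrder X] {w : List X} (h : IsALSW w) :
    ∀ p s : List X, p ≠ [] → s ≠ [] → w = p ++ s → gtLex w s := by
  intro p s hp hs hw
  have rot := h.2 p s hp hs hw
  rcases gtLex_of_append w s p rot with h1 | ⟨t, ht⟩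
  · exact h1
  · exfalso
    have hlen : t.length = p.length := by
      have := congrArg List.length (hw.symm.trans ht)
      simp [List.length_append] at this; omega
    have ht0 : t ≠ [] := by
      intro h0
      have : p.length > 0 := List.length_pos_iff.mpr hp
      rw [h0] at hlen; simp at hlen; omega
    rw [ht] at rot
    have h2 : gtLex t p := gtLex_strip s t p rot
    have h3 : gtLex (t ++ s) w := by
      rw [hw]; exact gtLex_append t p s s h2 (le_of_eq hlen.symm)
    have rot2 := h.2 s t hs ht0 ht
    exact gtLex_irrefl w (gtLex_trans _ _ _ rot2 h3)

/-- If `u₁ ++ u₂` and `u₂ ++ u₃` are ALSWs and `u₂ ≠ []`, then `u₁ ++ u₂ ++ u₃` is an ALSW. -/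
theorem isALSW_glue {X : Type*} [LinearOrder X] (u₁ u₂ u₃ : List X)
    (h12 : IsALSW (u₁ ++ u₂)) (h23 : IsALSW (u₂ ++ u₃)) (h2 : u₂ ≠ []) :
    IsALSW (u₁ ++ u₂ ++ u₃) := by
  rcases eq_or_ne u₁ [] with rfl | h1
  · simpa using h23
  rcases eq_or_ne u₃ [] with rfl | h3
  · simpa using h12
  have hS12 := suffGt_of_isALSW h12
  have hS23 := suffGt_of_isALSW h23
  have key : gtLex (u₁ ++ u₂ ++ u₃) (u₂ ++ u₃) := by
    have h := hS12 u₁ u₂ h1 h2 rfl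
    exact gtLex_append (u₁ ++ u₂) u₂ u₃ u₃ h (by simp)
  have hsuff : ∀ p s : List X, p ≠ [] → s ≠ [] → u₁ ++ u₂ ++ u₃ = p ++ s →
      gtLex (u₁ ++ u₂ ++ u₃) s := by
    intro p s hp hs hw
    rcases List.append_eq_append_iff.mp
        (show u₁ ++ (u₂ ++ u₃) = p ++ s by simpa [List.append_assoc] using hw) with
      ⟨q, hq1, hq2⟩ | ⟨q, hq1, hq2⟩
    · -- p = u₁ ++ q and u₂ ++ u₃ = q ++ s : `s` is a suffix of `u₂ ++ u₃`
      rcases eq_or_ne q [] with rfl | hq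
      · rw [show s = u₂ ++ u₃ from by simpa using hq2.symm]
        exact key
      · exact gtLex_trans _ _ _ key (hS23 q s hq hs hq2)
    · -- u₁ = p ++ q and s = q ++ (u₂ ++ u₃)
      have hgt : gtLex (u₁ ++ u₂) (q ++ u₂) :=
        hS12 p (q ++ u₂) hp (by simp [h2]) (by rw [hq1, List.append_assoc])
      have := gtLex_append (u₁ ++ u₂) (q ++ u₂) u₃ u₃ hgt
        (by simp [List.length_append, hq1])
      rw [hq2]
      simpa [List.append_assoc] using this
  constructor
  · intro hn
    rw [List.append_eq_nil_iff, List.append_eq_nil_iff] at hn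
    exact h2 hn.1.2
  · intro u v hu hv hw
    have h := hsuff u v hu hv hw
    have hl : v.length ≤ (u₁ ++ u₂ ++ u₃).length := by
      rw [hw]; simp
    simpa using gtLex_append _ v [] u h hl
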